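/- For a connected graph Γ with at least two vertices, the smallest eigenvalue δ_min of its distance matrix satisfies -δ_min ≥ D, where D is the diameter of Γ; moreover, equality -δ_min = D can only occur if D ∈ {1, 2}. -/

import Mathlib

open SimpleGraph Matrix Finset

/-- The distance matrix of a graph, with real entries. -/
noncomputable def distMatrix {V : Type*} [Fintype V] (G : SimpleGraph V) : Matrix V V ℝ :=
  Matrix.of fun x y => (G.dist x y : ℝ)

lemma distMatrix_isHermitian {V : Type*} [Fintype V] (G : SimpleGraph V) :
    (distMatrix G).IsHermitian := by
  ext x y
  simp [distMatrix, Matrix.conjTranspose_apply, SimpleGraph.dist_comm]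

/-- The multiset of eigenvalues (with multiplicity) of the distance matrix of `G`. -/
noncomputable def distSpec {V : Type*} [Fintype V] [DecidableEq V] (G : SimpleGraph V) :
    Multiset ℝ :=
  Finset.univ.val.map (distMatrix_isHermitian G).eigenvalues

lemma rayleigh_aux {V : Type*} [Fintype V] [DecidableEq V] (A : Matrix V V ℝ)
    (hA : A.IsHermitian) (v : V → ℝ) :
    ∃ w : V → ℝ,
      (hA.eigenvectorUnitary : Matrix V V ℝ) *ᵥ w = v ∧
      A *ᵥ v = (hA.eigenvectorUnitary : Matrix V V ℝ) *ᵥ (fun i => hA.eigenvalues i * w i) ∧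
      v ⬝ᵥ A *ᵥ v = ∑ i, hA.eigenvalues i * w i ^ 2 ∧
      v ⬝ᵥ v = ∑ i, w i ^ 2 := by
  set U : Matrix V V ℝ := (hA.eigenvectorUnitary : Matrix V V ℝ) with hUdef
  have hstarU : star U = Uᵀ := by
    rw [Matrix.star_eq_conjTranspose, Matrix.conjTranspose_eq_transpose_of_trivial]
  have h1 : U * Uᵀ = 1 := by
    rw [← hstarU]
    exact Matrix.mem_unitaryGroup_iff.mp hA.eigenvectorUnitary.2
  have h2 : Uᵀ * U = 1 := by
    rw [← hstarU]
    exact Matrix.mem_unitaryGroup_iff'.mp hA.eigenvectorUnitary.2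
  set w : V → ℝ := Uᵀ *ᵥ v with hw
  have hUw : U *ᵥ w = v := by
    rw [hw, Matrix.mulVec_mulVec, h1, Matrix.one_mulVec]
  have hspec : A = U * Matrix.diagonal hA.eigenvalues * Uᵀ := by
    have := hA.spectral_theorem
    rwa [Unitary.conjStarAlgAut_apply, hstarU] at this
  have hdiag : Matrix.diagonal hA.eigenvalues *ᵥ w = fun i => hA.eigenvalues i * w i := by
    funext i
    rw [Matrix.mulVec_diagonal]
  have hAv : A *ᵥ v = U *ᵥ (fun i => hA.eigenvalues i * w i) := by
    rw [← hdiag, hw, Matrix.mulVec_mulVec, Matrix.mulVec_mulVec, ← hspec]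
  have hvU : v ᵥ* U = w := by rw [hw, Matrix.mulVec_transpose]
  refine ⟨w, hUw, hAv, ?_, ?_⟩
  · rw [hAv, Matrix.dotProduct_mulVec, hvU, dotProduct]
    exact Finset.sum_congr rfl fun i _ => by ring
  · conv_lhs => rw [← hUw]
    rw [Matrix.dotProduct_mulVec, ← Matrix.mulVec_transpose, Matrix.mulVec_mulVec, h2,
      Matrix.one_mulVec, dotProduct]
    exact Finset.sum_congr rfl fun i _ => by ring

theorem dcube_stmt0 {V : Type*} [Fintype V] [DecidableEq V] (G : SimpleGraph V)
    (hn : 2 ≤ Fintype.card V) (hconn : G.Connected) (δmin : ℝ)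
    (hmem : δmin ∈ distSpec G) (hmin : ∀ μ ∈ distSpec G, δmin ≤ μ) :
    (G.diam : ℝ) ≤ -δmin ∧ (-δmin = (G.diam : ℝ) → G.diam = 1 ∨ G.diam = 2) := by
  classical
  have hnt : Nontrivial V := Fintype.one_lt_card_iff_nontrivial.mp hn
  have hetop : G.ediam ≠ ⊤ := by
    obtain ⟨u, v, huv⟩ := SimpleGraph.exists_edist_eq_ediam_of_finite (G := G)
    rw [← huv]
    exact SimpleGraph.edist_ne_top_iff_reachable.mpr (hconn u v)
  have hdpos : 0 < G.diam := by
    rcases Nat.eq_zero_or_pos G.diam with h | h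
    · rw [SimpleGraph.diam_eq_zero] at h
      rcases h with h | h
      · exact absurd h hetop
      · exact absurd h (not_subsingleton V)
    · exact h
  obtain ⟨x, y, hxy⟩ := SimpleGraph.exists_dist_eq_diam (G := G)
  have hxyne : x ≠ y := by
    intro h
    rw [h, SimpleGraph.dist_self] at hxy
    omega
  set A : Matrix V V ℝ := distMatrix G with hAdef
  have hA : A.IsHermitian := distMatrix_isHermitian G
  set v : V → ℝ := Pi.single x 1 - Pi.single y 1 with hv
  have hAapp : ∀ z t : V, A z t = (G.dist z t : ℝ) := fun z t => rfl
  have hAv : A *ᵥ v = fun z => (G.dist z x : ℝ) - (G.dist z y : ℝ) := by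
    funext z
    rw [hv, Matrix.mulVec_sub]
    simp [Matrix.mulVec_single, hAapp]
  have hvAv : v ⬝ᵥ A *ᵥ v = -2 * (G.diam : ℝ) := by
    rw [hAv, hv, sub_dotProduct, single_dotProduct, single_dotProduct]
    show (1:ℝ) * ((G.dist x x : ℝ) - G.dist x y) - 1 * ((G.dist y x : ℝ) - G.dist y y) = _
    rw [SimpleGraph.dist_self, SimpleGraph.dist_self, hxy, SimpleGraph.dist_comm, hxy]
    push_cast; ring
  have hvv : v ⬝ᵥ v = 2 := by
    rw [hv, sub_dotProduct, dotProduct_sub, dotProduct_sub,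
      single_dotProduct, single_dotProduct]
    simp [Pi.single_apply, hxyne, hxyne.symm]
    norm_num
  have hminEig : ∀ i : V, δmin ≤ hA.eigenvalues i := fun i =>
    hmin _ (Multiset.mem_map_of_mem _ (Finset.mem_univ i))
  obtain ⟨w, hUw, hAv2, hquad, hnorm⟩ := rayleigh_aux A hA v
  have hterm : ∀ i ∈ Finset.univ, (0:ℝ) ≤ (hA.eigenvalues i - δmin) * w i ^ 2 :=
    fun i _ => mul_nonneg (by linarith [hminEig i]) (sq_nonneg _)
  have hsum : ∑ i, (hA.eigenvalues i - δmin) * w i ^ 2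
      = (v ⬝ᵥ A *ᵥ v) - δmin * (v ⬝ᵥ v) := by
    rw [hquad, hnorm, Finset.mul_sum, ← Finset.sum_sub_distrib]
    exact Finset.sum_congr rfl fun i _ => by ring
  have hineq : (0:ℝ) ≤ (v ⬝ᵥ A *ᵥ v) - δmin * (v ⬝ᵥ v) := hsum ▸ Finset.sum_nonneg hterm
  rw [hvAv, hvv] at hineq
  constructor
  · linarith
  · intro heq
    by_contra hcon
    push_neg at hcon
    have hd3 : 3 ≤ G.diam := by omega
    -- equality forces eigenvector equation
    have hzero : ∑ i, (hA.eigenvalues i - δmin) * w i ^ 2 = 0 := by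
      rw [hsum, hvAv, hvv]; linarith
    have hall : ∀ i ∈ Finset.univ, (hA.eigenvalues i - δmin) * w i ^ 2 = 0 :=
      (Finset.sum_eq_zero_iff_of_nonneg hterm).mp hzero
    have hlam : (fun i => hA.eigenvalues i * w i) = δmin • w := by
      funext i
      have := hall i (Finset.mem_univ i)
      rcases mul_eq_zero.mp this with h | h
      · have : hA.eigenvalues i = δmin := by linarith
        simp [this]
      · have : w i = 0 := pow_eq_zero_iff (n := 2) (by norm_num) |>.mp h
        simp [this]
    have heig : A *ᵥ v = δmin • v := by
      rw [hAv2, hlam, Matrix.mulVec_smul, hUw]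
    -- find a vertex z adjacent to x on a geodesic to y
    obtain ⟨p, hp⟩ := (hconn x y).exists_walk_length_eq_dist
    have hplen : 0 < p.length := by omega
    set z : V := p.getVert 1 with hz
    have hadj : G.Adj x z := by
      have := p.adj_getVert_succ (i := 0) hplen
      rwa [SimpleGraph.Walk.getVert_zero] at this
    have hzx : G.dist z x = 1 := by
      rw [SimpleGraph.dist_comm, SimpleGraph.dist_eq_one_iff_adj]
      exact hadj
    have hpnil : ¬ p.Nil := SimpleGraph.Walk.not_nil_iff_lt_length.mpr hplen
    have hzyle : G.dist z y ≤ G.diam - 1 := by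
      have htail := SimpleGraph.Walk.length_tail_add_one hpnil
      have hle : G.dist z y ≤ p.tail.length := SimpleGraph.dist_le p.tail
      omega
    have hzyge : G.diam - 1 ≤ G.dist z y := by
      have htri := hconn.dist_triangle (u := x) (v := z) (w := y)
      have : G.dist x z = 1 := SimpleGraph.dist_eq_one_iff_adj.mpr hadj
      omega
    have hzy : G.dist z y = G.diam - 1 := le_antisymm hzyle hzyge
    have hznx : z ≠ x := (hadj.ne).symm
    have hzny : z ≠ y := by
      intro h
      rw [h, SimpleGraph.dist_self] at hzy
      omega
    have hcoord := congrFun heig z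
    rw [hAv] at hcoord
    have hvz : v z = 0 := by
      rw [hv]
      simp [Pi.single_apply, hznx, hzny]
    simp only [Pi.smul_apply, hvz, smul_eq_mul, mul_zero] at hcoord
    have hnat : G.dist z x = G.dist z y := by
      have : (G.dist z x : ℝ) = (G.dist z y : ℝ) := by linarith
      exact_mod_cast this
    rw [hzx, hzy] at hnat
    omega
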